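/- Let Z ⊆ 𝕋^k be a Jordan measurable set and let Z_1, …, Z_N be pairwise disjoint subsets of Z. Suppose that for every ε > 0 there exist Jordan measurable sets Z_j' ⊆ Z_j (for 1 ≤ j ≤ N) such that λ(Z ∖ ⋃_{j=1}^N Z_j') < ε, where λ is Lebesgue measure. Then each of the sets Z_1, …, Z_N is Jordan measurable. -/

import Mathlib

open MeasureTheory

lemma frontier_iUnion_subset_of_finite {α : Type*} [TopologicalSpace α] {ι : Type*} [Finite ι]
    (f : ι → Set α) : frontier (⋃ i, f i) ⊆ ⋃ i, frontier (f i) := by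
  intro x hx
  obtain ⟨hx1, hx2⟩ := hx
  rw [closure_iUnion_of_finite] at hx1
  obtain ⟨_, ⟨i, rfl⟩, hxi⟩ := hx1
  have : x ∉ interior (f i) := fun h => hx2 (interior_mono (Set.subset_iUnion f i) h)
  exact Set.mem_iUnion.2 ⟨i, hxi, this⟩

/-- If `Z₁, …, Z_N` are pairwise disjoint subsets of a Jordan measurable set
`Z ⊆ 𝕋^k` and, for every `ε > 0`, there are Jordan measurable subsets `Z_j' ⊆ Z_j`
with `λ(Z ∖ ⋃ⱼ Z_j') < ε`, then all the sets `Z₁, …, Z_N` are Jordan measurable.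
(Jordan measurability of a subset of the torus means that its topological boundary
is Lebesgue null.) -/
theorem jordan_measurable_limit {k : ℕ} {N : ℕ}
    (Z : Set (Fin k → AddCircle (1 : ℝ)))
    (Zs : Fin N → Set (Fin k → AddCircle (1 : ℝ)))
    (hsub : ∀ j, Zs j ⊆ Z)
    (hdisj : Pairwise (Function.onFun Disjoint Zs))
    (hZ : volume (frontier Z) = 0)
    (happrox : ∀ ε : ℝ, 0 < ε → ∃ Z' : Fin N → Set (Fin k → AddCircle (1 : ℝ)),
      (∀ j, Z' j ⊆ Zs j) ∧ (∀ j, volume (frontier (Z' j)) = 0) ∧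
      volume (Z \ ⋃ j, Z' j) < ENNReal.ofReal ε) :
    ∀ j, volume (frontier (Zs j)) = 0 := by
  intro j
  have key : ∀ ε : ℝ, 0 < ε → volume (frontier (Zs j)) ≤ ENNReal.ofReal ε := by
    intro ε hε
    obtain ⟨Z', hZ'sub, hZ'fr, hZ'meas⟩ := happrox ε hε
    set U : Set (Fin k → AddCircle (1 : ℝ)) := ⋃ i : {i : Fin N // i ≠ j}, Z' i with hU
    set W : Set (Fin k → AddCircle (1 : ℝ)) := Z \ U with hWdef
    -- Zs j ⊆ W
    have h1 : Zs j ⊆ W := by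
      intro x hx
      refine ⟨hsub j hx, ?_⟩
      rw [hU, Set.mem_iUnion]
      rintro ⟨⟨i, hij⟩, hxi⟩
      exact Set.disjoint_left.mp (hdisj hij) (hZ'sub i hxi) hx
    have h2 : frontier (Zs j) ⊆ closure W \ interior (Z' j) := by
      intro x ⟨hx1, hx2⟩
      exact ⟨closure_mono h1 hx1, fun h => hx2 (interior_mono ((hZ'sub j).trans subset_rfl) h)⟩
    have h3 : closure W \ interior (Z' j) ⊆
        (W \ Z' j) ∪ frontier W ∪ frontier (Z' j) := by
      intro x ⟨hx1, hx2⟩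
      by_cases hW : x ∈ W
      · by_cases hA : x ∈ Z' j
        · exact Or.inr ⟨subset_closure hA, hx2⟩
        · exact Or.inl (Or.inl ⟨hW, hA⟩)
      · exact Or.inl (Or.inr ⟨hx1, fun h => hW (interior_subset h)⟩)
    have h4 : W \ Z' j ⊆ Z \ ⋃ i, Z' i := by
      rintro x ⟨⟨hxZ, hxU⟩, hxj⟩
      refine ⟨hxZ, ?_⟩
      rw [Set.mem_iUnion]
      rintro ⟨i, hxi⟩
      by_cases hij : i = j
      · exact hxj (hij ▸ hxi)
      · exact hxU (Set.mem_iUnion.2 ⟨⟨i, hij⟩, hxi⟩)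
    have h5 : volume (frontier W) = 0 := by
      have hWsub : frontier W ⊆ frontier Z ∪ ⋃ i : {i : Fin N // i ≠ j}, frontier (Z' i) := by
        have : frontier W ⊆ frontier Z ∪ frontier Uᶜ := by
          rw [hWdef, Set.diff_eq]
          exact (frontier_inter_subset _ _).trans
            (Set.union_subset_union (Set.inter_subset_left)
              (Set.inter_subset_right))
        refine this.trans (Set.union_subset_union subset_rfl ?_)
        rw [frontier_compl]
        exact frontier_iUnion_subset_of_finite _
      refine measure_mono_null hWsub ?_
      rw [measure_union_null_iff]
      exact ⟨hZ, measure_iUnion_null fun i => hZ'fr i⟩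
    calc volume (frontier (Zs j)) ≤ volume ((W \ Z' j) ∪ frontier W ∪ frontier (Z' j)) :=
          measure_mono (h2.trans h3)
      _ ≤ volume (W \ Z' j) + volume (frontier W) + volume (frontier (Z' j)) :=
          le_trans (measure_union_le _ _) (add_le_add (measure_union_le _ _) le_rfl)
      _ = volume (W \ Z' j) := by rw [h5, hZ'fr j, add_zero, add_zero]
      _ ≤ volume (Z \ ⋃ i, Z' i) := measure_mono h4
      _ ≤ ENNReal.ofReal ε := hZ'meas.le
  refine le_antisymm (ENNReal.le_of_forall_pos_le_add fun ε hε _ => ?_) zero_le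
  have := key ε (by exact_mod_cast hε)
  rw [ENNReal.ofReal_coe_nnreal] at this
  rwa [zero_add]
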